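/- Let the sequence N_r be defined by N_2 = (m_1 - 1)(m_2 - 1) and N_r = m_r · N_{r-1} + (m_r - 1)·(∏_{i=1}^{r-1} m_i − 1) for r ≥ 3, where m_1, ..., m_r are positive integers. Then for all r ≥ 2, N_r = (r−1)·∏_{i=1}^r m_i − Σ_{i=1}^r ∏_{j≠i} m_j + 1. -/

import Mathlib

/-- the recursively defined sequence `N` with
`N 2 = (m 1 - 1) * (m 2 - 1)` and, for `r ≥ 3`,
`N r = m r * N (r-1) + (m r - 1) * (∏_{i=1}^{r-1} m i - 1)`,
satisfies the closed formula
`N r = (r-1) * ∏_{i=1}^r m i - ∑_{i=1}^r ∏_{j ≠ i} m j + 1` for all `r ≥ 2`. -/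
theorem stmt_12 (m : ℕ → ℤ) (hm : ∀ i, 1 ≤ m i) (N : ℕ → ℤ)
    (hN2 : N 2 = (m 1 - 1) * (m 2 - 1))
    (hNr : ∀ r, 3 ≤ r →
      N r = m r * N (r - 1) + (m r - 1) * ((∏ i ∈ Finset.Icc 1 (r - 1), m i) - 1)) :
    ∀ r, 2 ≤ r →
      N r = ((r : ℤ) - 1) * (∏ i ∈ Finset.Icc 1 r, m i) -
        (∑ i ∈ Finset.Icc 1 r, ∏ j ∈ (Finset.Icc 1 r).erase i, m j) + 1 := by
  intro r hr
  induction r, hr using Nat.le_induction with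
  | base =>
    have h2 : Finset.Icc 1 2 = {1, 2} := by decide
    have e1 : ({1, 2} : Finset ℕ).erase 1 = {2} := by decide
    have e2 : ({1, 2} : Finset ℕ).erase 2 = {1} := by decide
    rw [hN2, h2, Finset.sum_pair (by norm_num), e1, e2,
      Finset.prod_pair (by norm_num), Finset.prod_singleton, Finset.prod_singleton]
    push_cast
    ring
  | succ r hr ih =>
    have hP : (∏ i ∈ Finset.Icc 1 (r + 1), m i) = (∏ i ∈ Finset.Icc 1 r, m i) * m (r + 1) :=
      Finset.prod_Icc_succ_top (by omega) m
    have hnot : (r + 1) ∉ Finset.Icc 1 r := by simp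
    have hins : Finset.Icc 1 (r + 1) = insert (r + 1) (Finset.Icc 1 r) := by
      exact (Finset.insert_Icc_right_eq_Icc_add_one (by omega)).symm
    have hS : (∑ i ∈ Finset.Icc 1 (r + 1), ∏ j ∈ (Finset.Icc 1 (r + 1)).erase i, m j)
        = (∏ j ∈ Finset.Icc 1 r, m j)
          + m (r + 1) * ∑ i ∈ Finset.Icc 1 r, ∏ j ∈ (Finset.Icc 1 r).erase i, m j := by
      rw [hins, Finset.sum_insert hnot, Finset.erase_insert hnot, Finset.mul_sum]
      congr 1
      refine Finset.sum_congr rfl fun i hi => ?_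
      have hne : (r + 1) ≠ i := by
        simp only [Finset.mem_Icc] at hi; omega
      rw [Finset.erase_insert_of_ne hne, Finset.prod_insert (by simp)]
    rw [hNr (r + 1) (by omega)]
    simp only [Nat.add_sub_cancel]
    rw [ih, hP, hS]
    push_cast
    ring
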